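/- With the data (k, 𝔛, V, d) and the auxiliary Lie algebra g̃ as in the context, assume 𝔛 has enough modules. Then g̃ decomposes as a direct sum of k-vector subspaces g̃ = n₋ ⊕ ι₀(𝔛) ⊕ n₊, where n₊ and n₋ are the Lie subalgebras of g̃ generated by the images of V and V*. Moreover, with respect to the ℤ-grading of g̃, one has n₋ = ⊕_{n<0} g̃_n, ι₀(𝔛) = g̃_0, and n₊ = ⊕_{n>0} g̃_n. -/

import Mathlib

/-! ## Semidirect product of Lie algebras along an action by derivations -/

variable (R : Type*) [CommRing R] (L : Type*) [LieRing L] [LieAlgebra R L]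
  (M : Type*) [LieRing M] [LieAlgebra R M]

/-- Type synonym for the semidirect product of Lie algebras. -/
@[nolint unusedArguments]
def LieSemidirectProduct (_δ : M →ₗ⁅R⁆ LieDerivation R L L) : Type _ := L × M

namespace LieSemidirectProduct

variable {R L M}
variable (δ : M →ₗ⁅R⁆ LieDerivation R L L)

instance : AddCommGroup (LieSemidirectProduct R L M δ) :=
  inferInstanceAs (AddCommGroup (L × M))

instance : Module R (LieSemidirectProduct R L M δ) :=
  inferInstanceAs (Module R (L × M))

/-- Build an element of the semidirect product. -/
def mk (t : L) (x : M) : LieSemidirectProduct R L M δ := (t, x)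

@[simp] lemma mk_fst (t : L) (x : M) : (mk δ t x).1 = t := rfl
@[simp] lemma mk_snd (t : L) (x : M) : (mk δ t x).2 = x := rfl

instance : LieRing (LieSemidirectProduct R L M δ) where
  bracket p q := (⁅p.1, q.1⁆ + δ p.2 q.1 - δ q.2 p.1, ⁅p.2, q.2⁆)
  add_lie p q r := by
    show Prod.mk _ _ = Prod.mk _ _ + Prod.mk _ _
    show _ = Prod.mk (_ + _) (_ + _)
    refine congrArg₂ Prod.mk ?_ (add_lie _ _ _)
    show ⁅p.1 + q.1, r.1⁆ + δ (p.2 + q.2) r.1 - δ r.2 (p.1 + q.1) = _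
    simp only [add_lie, LieDerivation.add_apply, map_add]
    abel
  lie_add p q r := by
    show Prod.mk _ _ = Prod.mk _ _ + Prod.mk _ _
    show _ = Prod.mk (_ + _) (_ + _)
    refine congrArg₂ Prod.mk ?_ (lie_add _ _ _)
    show ⁅p.1, q.1 + r.1⁆ + δ p.2 (q.1 + r.1) - δ (q.2 + r.2) p.1 = _
    simp only [lie_add, LieDerivation.add_apply, map_add]
    abel
  lie_self p := by
    show Prod.mk _ _ = (0 : L × M)
    rw [Prod.mk_eq_zero]
    constructor
    · show ⁅p.1, p.1⁆ + δ p.2 p.1 - δ p.2 p.1 = 0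
      simp
    · exact lie_self _
  leibniz_lie p q r := by
    show Prod.mk _ _ = Prod.mk _ _ + Prod.mk _ _
    show _ = Prod.mk (_ + _) (_ + _)
    refine congrArg₂ Prod.mk ?_ (leibniz_lie _ _ _)
    show ⁅p.1, ⁅q.1, r.1⁆ + δ q.2 r.1 - δ r.2 q.1⁆ + δ p.2 (⁅q.1, r.1⁆ + δ q.2 r.1 - δ r.2 q.1)
        - δ ⁅q.2, r.2⁆ p.1
      = (⁅⁅p.1, q.1⁆ + δ p.2 q.1 - δ q.2 p.1, r.1⁆ + δ ⁅p.2, q.2⁆ r.1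
          - δ r.2 (⁅p.1, q.1⁆ + δ p.2 q.1 - δ q.2 p.1))
        + (⁅q.1, ⁅p.1, r.1⁆ + δ p.2 r.1 - δ r.2 p.1⁆ + δ q.2 (⁅p.1, r.1⁆ + δ p.2 r.1 - δ r.2 p.1)
          - δ ⁅p.2, r.2⁆ q.1)
    have hskew : ⁅δ r.2 p.1, q.1⁆ = -⁅q.1, δ r.2 p.1⁆ := (lie_skew _ _).symm
    simp only [lie_add, add_lie, lie_sub, sub_lie, map_add, map_sub,
      LieHom.map_lie, LieDerivation.lie_apply, LieDerivation.apply_lie_eq_add, hskew,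
      LieDerivation.add_apply, LieDerivation.sub_apply]
    rw [leibniz_lie p.1 q.1 r.1]
    abel

instance : LieAlgebra R (LieSemidirectProduct R L M δ) where
  lie_smul c p q := by
    show Prod.mk _ _ = c • Prod.mk _ _
    show _ = Prod.mk (c • _) (c • _)
    refine congrArg₂ Prod.mk ?_ (lie_smul _ _ _)
    show ⁅p.1, c • q.1⁆ + δ p.2 (c • q.1) - δ (c • q.2) p.1 = _
    simp only [lie_smul, LieDerivation.smul_apply, smul_add, smul_sub, map_smul]

@[simp] lemma bracket_def (p q : LieSemidirectProduct R L M δ) :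
    ⁅p, q⁆ = (mk δ (⁅p.1, q.1⁆ + δ p.2 q.1 - δ q.2 p.1) ⁅p.2, q.2⁆) := rfl

/-- The canonical inclusion of `L` into the semidirect product. -/
def inl : L →ₗ⁅R⁆ LieSemidirectProduct R L M δ where
  toFun t := mk δ t 0
  map_add' t s := by
    show Prod.mk _ _ = Prod.mk _ _ + Prod.mk _ _
    show _ = Prod.mk (_ + _) (_ + _)
    rw [add_zero]
  map_smul' c t := by
    show Prod.mk _ _ = c • Prod.mk _ _
    show _ = Prod.mk (c • _) (c • _)
    rw [smul_zero]
  map_lie' {t s} := by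
    show mk δ ⁅t, s⁆ 0 = mk δ (⁅t, s⁆ + δ 0 s - δ 0 t) ⁅(0 : M), (0 : M)⁆
    simp [mk] <;> rfl

/-- The canonical inclusion of `M` into the semidirect product. -/
def inr : M →ₗ⁅R⁆ LieSemidirectProduct R L M δ where
  toFun x := mk δ 0 x
  map_add' x y := by
    show Prod.mk _ _ = Prod.mk _ _ + Prod.mk _ _
    show _ = Prod.mk (_ + _) (_ + _)
    rw [add_zero]
  map_smul' c x := by
    show Prod.mk _ _ = c • Prod.mk _ _
    show _ = Prod.mk (c • _) (c • _)
    rw [smul_zero]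
  map_lie' {x y} := by
    show mk δ 0 ⁅x, y⁆ = mk δ (⁅(0 : L), (0 : L)⁆ + δ x 0 - δ y 0) ⁅x, y⁆
    simp [mk] <;> rfl

end LieSemidirectProduct

/-! ## The contragredient construction -/

open TensorProduct

attribute [local instance 100] LieRing.ofAssociativeRing

namespace Contragredient

variable (k : Type*) [Field k]
variable {X : Type*} [LieRing X] [LieAlgebra k X]
variable (V : Type*) [AddCommGroup V] [Module k V]

/-- The action of `X` on the dual of `V` induced by a representation `φ`:
`(x · f) v = - f (x · v)`. -/
def dualAct (φ : X →ₗ⁅k⁆ Module.End k V) (x : X) (f : Module.Dual k V) :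
    Module.Dual k V :=
  -(f ∘ₗ φ x)

/-- The free Lie algebra on `V ⊕ V*`: the Lie subalgebra of the tensor algebra
(with commutator bracket) generated by `V ⊕ V*`. -/
def F : LieSubalgebra k (TensorAlgebra k (V × Module.Dual k V)) :=
  LieSubalgebra.lieSpan k _ (Set.range (TensorAlgebra.ι k))

/-- The canonical inclusion of `V ⊕ V*` into the free Lie algebra on it. -/
def ιF (w : V × Module.Dual k V) : F k V :=
  ⟨TensorAlgebra.ι k w, LieSubalgebra.subset_lieSpan ⟨w, rfl⟩⟩

variable {V}
variable (δ : X →ₗ⁅k⁆ LieDerivation k (F k V) (F k V))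
variable (d : V ⊗[k] Module.Dual k V →ₗ[k] X)

/-- The semidirect product `FLie(V ⊕ V*) ⋊ X`. -/
abbrev SD := LieSemidirectProduct k (F k V) X δ

/-- The defining relations of the auxiliary contragredient Lie algebra. -/
def rel : Set (SD k δ) :=
  { p | ∃ (v : V) (f : Module.Dual k V),
      p = LieSemidirectProduct.mk δ ⁅ιF k V (v, 0), ιF k V (0, f)⁆ (-(d (v ⊗ₜ[k] f))) }

/-- The ideal of relations. -/
def I0 : LieIdeal k (SD k δ) := LieSubmodule.lieSpan k _ (rel k δ d)

/-- The auxiliary contragredient Lie algebra `g̃(ρ, d)`. -/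
abbrev gt := SD k δ ⧸ I0 k δ d

/-- The quotient map onto the auxiliary contragredient Lie algebra. -/
def π : SD k δ →ₗ⁅k⁆ gt k δ d :=
  { (I0 k δ d).toSubmodule.mkQ with
    map_lie' := fun {_ _} => rfl }

/-- The canonical map from `X` to `g̃`. -/
def ι₀ : X →ₗ⁅k⁆ gt k δ d := (π k δ d).comp (LieSemidirectProduct.inr δ)

/-- The canonical map from `V` to `g̃`. -/
def gtV (v : V) : gt k δ d := π k δ d (LieSemidirectProduct.mk δ (ιF k V (v, 0)) 0)

/-- The canonical map from `V*` to `g̃`. -/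
def gtD (f : Module.Dual k V) : gt k δ d :=
  π k δ d (LieSemidirectProduct.mk δ (ιF k V (0, f)) 0)

/-- The positive subalgebra `n₊` of `g̃`: the Lie subalgebra generated by the image of `V`. -/
def nPlus : LieSubalgebra k (gt k δ d) :=
  LieSubalgebra.lieSpan k _ (Set.range (gtV k δ d))

/-- The negative subalgebra `n₋` of `g̃`: the Lie subalgebra generated by the image of `V*`. -/
def nMinus : LieSubalgebra k (gt k δ d) :=
  LieSubalgebra.lieSpan k _ (Set.range (gtD k δ d))

universe w

/-- `X` has enough modules: for every nonzero `x : X` there is a representation of `X`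
on which `x` acts nontrivially. -/
def HasEnoughModules (k : Type*) [Field k] (X : Type*) [LieRing X] [LieAlgebra k X] : Prop :=
  ∀ x : X, x ≠ 0 →
    ∃ (W : Type w) (_ : AddCommGroup W) (_ : Module k W)
      (ρW : X →ₗ⁅k⁆ Module.End k W), ρW x ≠ 0

end Contragredient

namespace Contragredient

section Aux
open LieSemidirectProduct
variable {k : Type*} [Field k]
  {X : Type*} [LieRing X] [LieAlgebra k X]
  {V : Type*} [AddCommGroup V] [Module k V]
  (φ : X →ₗ⁅k⁆ Module.End k V)
  (δ : X →ₗ⁅k⁆ LieDerivation k (F k V) (F k V))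
  (d : V ⊗[k] Module.Dual k V →ₗ[k] X)

lemma dualAct_zero (x : X) : dualAct k V φ x 0 = 0 := by
  simp [dualAct]

lemma ιF_split (v : V) (f : Module.Dual k V) :
    ιF k V (v, f) = ιF k V (v, 0) + ιF k V (0, f) := by
  apply Subtype.ext
  show TensorAlgebra.ι k (v, f) = ((ιF k V (v,0) : F k V) : TensorAlgebra k (V × Module.Dual k V)) + ((ιF k V (0,f) : F k V) : _)
  show TensorAlgebra.ι k (v, f) = TensorAlgebra.ι k ((v,0) : V × Module.Dual k V) + TensorAlgebra.ι k ((0,f) : V × Module.Dual k V)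
  rw [← map_add]
  congr 1
  simp [Prod.ext_iff]

lemma lie_mk_mk (t s : F k V) :
    (⁅mk δ t 0, mk δ s 0⁆ : SD k δ) = mk δ ⁅t, s⁆ 0 := by
  rw [bracket_def]
  simp

lemma lie_inr_mk (x : X) (t : F k V) :
    (⁅mk δ 0 x, mk δ t 0⁆ : SD k δ) = mk δ (δ x t) 0 := by
  rw [bracket_def]
  simp

lemma π_eq_zero {p : SD k δ} (hp : p ∈ I0 k δ d) : π k δ d p = 0 :=
  (Submodule.Quotient.mk_eq_zero _).2 hp

lemma ι₀_apply (x : X) : ι₀ k δ d x = π k δ d (mk δ 0 x) := rfl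

lemma lie_gtV_gtD (v : V) (f : Module.Dual k V) :
    ⁅gtV k δ d v, gtD k δ d f⁆ = ι₀ k δ d (d (v ⊗ₜ[k] f)) := by
  have hrel : (mk δ ⁅ιF k V (v,0), ιF k V (0,f)⁆ (-(d (v ⊗ₜ[k] f))) : SD k δ) ∈ I0 k δ d :=
    LieSubmodule.subset_lieSpan ⟨v, f, rfl⟩
  have h0 := π_eq_zero δ d hrel
  have hsplit : (mk δ ⁅ιF k V (v,0), ιF k V (0,f)⁆ (-(d (v ⊗ₜ[k] f))) : SD k δ)
      = mk δ ⁅ιF k V (v,0), ιF k V (0,f)⁆ 0 - mk δ 0 (d (v ⊗ₜ[k] f)) := by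
    show ((⁅ιF k V (v,0), ιF k V (0,f)⁆, -(d (v ⊗ₜ[k] f))) : (F k V) × X)
        = ((⁅ιF k V (v,0), ιF k V (0,f)⁆, (0:X)) : (F k V) × X) - (((0 : F k V), d (v ⊗ₜ[k] f)) : (F k V) × X)
    rw [Prod.mk_sub_mk]
    simp
  rw [hsplit, map_sub, sub_eq_zero] at h0
  show π k δ d ⁅mk δ (ιF k V (v,0)) 0, mk δ (ιF k V (0,f)) 0⁆ = _
  rw [lie_mk_mk, h0, ι₀_apply]

lemma gtV_mem_nPlus (v : V) : gtV k δ d v ∈ nPlus k δ d :=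
  LieSubalgebra.subset_lieSpan ⟨v, rfl⟩

lemma gtD_mem_nMinus (f : Module.Dual k V) : gtD k δ d f ∈ nMinus k δ d :=
  LieSubalgebra.subset_lieSpan ⟨f, rfl⟩
variable (hδ : ∀ (x : X) (v : V) (f : Module.Dual k V),
      ((δ x (ιF k V (v, f)) : F k V) : TensorAlgebra k (V × Module.Dual k V))
        = TensorAlgebra.ι k (φ x v, dualAct k V φ x f))

include hδ

lemma lie_ι₀_gtV (x : X) (v : V) :
    ⁅ι₀ k δ d x, gtV k δ d v⁆ = gtV k δ d (φ x v) := by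
  have h1 : δ x (ιF k V (v, 0)) = ιF k V (φ x v, 0) := by
    apply Subtype.ext
    rw [hδ x v 0, dualAct_zero]
    rfl
  show π k δ d ⁅mk δ 0 x, mk δ (ιF k V (v,0)) 0⁆ = _
  rw [lie_inr_mk, h1]
  rfl

lemma lie_ι₀_gtD (x : X) (f : Module.Dual k V) :
    ⁅ι₀ k δ d x, gtD k δ d f⁆ = gtD k δ d (dualAct k V φ x f) := by
  have h1 : δ x (ιF k V (0, f)) = ιF k V (0, dualAct k V φ x f) := by
    apply Subtype.ext
    rw [hδ x 0 f]
    show TensorAlgebra.ι k _ = TensorAlgebra.ι k _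
    rw [map_zero]
  show π k δ d ⁅mk δ 0 x, mk δ (ιF k V (0,f)) 0⁆ = _
  rw [lie_inr_mk, h1]
  rfl
lemma lie_ι₀_nMinus :
    ∀ m ∈ nMinus k δ d, ∀ x : X, ⁅ι₀ k δ d x, m⁆ ∈ nMinus k δ d := by
  let K : LieSubalgebra k (gt k δ d) :=
    { carrier := {m | m ∈ nMinus k δ d ∧ ∀ x : X, ⁅ι₀ k δ d x, m⁆ ∈ nMinus k δ d}
      add_mem' := fun {a b} ha hb => ⟨add_mem ha.1 hb.1,
        fun x => by rw [lie_add]; exact add_mem (ha.2 x) (hb.2 x)⟩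
      zero_mem' := ⟨zero_mem _, fun x => by rw [lie_zero]; exact zero_mem _⟩
      smul_mem' := fun c a ha => ⟨(nMinus k δ d).smul_mem c ha.1,
        fun x => by rw [lie_smul]; exact (nMinus k δ d).smul_mem c (ha.2 x)⟩
      lie_mem' := fun {a b} ha hb => ⟨(nMinus k δ d).lie_mem ha.1 hb.1, fun x => by
        rw [leibniz_lie]
        exact add_mem ((nMinus k δ d).lie_mem (ha.2 x) hb.1)
          ((nMinus k δ d).lie_mem ha.1 (hb.2 x))⟩ }
  have hle : nMinus k δ d ≤ K := by
    rw [nMinus]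
    refine LieSubalgebra.lieSpan_le.2 ?_
    rintro _ ⟨f, rfl⟩
    exact ⟨gtD_mem_nMinus δ d f, fun x => by
      rw [lie_ι₀_gtD φ δ d hδ x f]; exact gtD_mem_nMinus δ d _⟩
  exact fun m hm x => (hle hm).2 x

lemma lie_ι₀_nPlus :
    ∀ p ∈ nPlus k δ d, ∀ x : X, ⁅ι₀ k δ d x, p⁆ ∈ nPlus k δ d := by
  let K : LieSubalgebra k (gt k δ d) :=
    { carrier := {m | m ∈ nPlus k δ d ∧ ∀ x : X, ⁅ι₀ k δ d x, m⁆ ∈ nPlus k δ d}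
      add_mem' := fun {a b} ha hb => ⟨add_mem ha.1 hb.1,
        fun x => by rw [lie_add]; exact add_mem (ha.2 x) (hb.2 x)⟩
      zero_mem' := ⟨zero_mem _, fun x => by rw [lie_zero]; exact zero_mem _⟩
      smul_mem' := fun c a ha => ⟨(nPlus k δ d).smul_mem c ha.1,
        fun x => by rw [lie_smul]; exact (nPlus k δ d).smul_mem c (ha.2 x)⟩
      lie_mem' := fun {a b} ha hb => ⟨(nPlus k δ d).lie_mem ha.1 hb.1, fun x => by
        rw [leibniz_lie]
        exact add_mem ((nPlus k δ d).lie_mem (ha.2 x) hb.1)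
          ((nPlus k δ d).lie_mem ha.1 (hb.2 x))⟩ }
  have hle : nPlus k δ d ≤ K := by
    rw [nPlus]
    refine LieSubalgebra.lieSpan_le.2 ?_
    rintro _ ⟨v, rfl⟩
    exact ⟨gtV_mem_nPlus δ d v, fun x => by
      rw [lie_ι₀_gtV φ δ d hδ x v]; exact gtV_mem_nPlus δ d _⟩
  exact fun m hm x => (hle hm).2 x

omit hδ in
lemma mem_sup_nMinus_ι₀ {y : gt k δ d}
    (hy : y ∈ (nMinus k δ d).toSubmodule ⊔ LinearMap.range (ι₀ k δ d).toLinearMap) :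
    ∃ m ∈ nMinus k δ d, ∃ x : X, y = m + ι₀ k δ d x := by
  obtain ⟨a, ha, b, hb, rfl⟩ := Submodule.mem_sup.1 hy
  obtain ⟨x, rfl⟩ := hb
  exact ⟨a, ha, x, rfl⟩

lemma lie_gtV_nMinus :
    ∀ m ∈ nMinus k δ d, ∀ v : V,
      ⁅gtV k δ d v, m⁆ ∈ (nMinus k δ d).toSubmodule ⊔ LinearMap.range (ι₀ k δ d).toLinearMap := by
  set S₀ := (nMinus k δ d).toSubmodule ⊔ LinearMap.range (ι₀ k δ d).toLinearMap with hS₀def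
  have hbr : ∀ y ∈ S₀, ∀ m' ∈ nMinus k δ d, ⁅y, m'⁆ ∈ nMinus k δ d := by
    intro y hy m' hm'
    obtain ⟨m, hm, x, rfl⟩ := mem_sup_nMinus_ι₀ δ d hy
    rw [add_lie]
    exact add_mem ((nMinus k δ d).lie_mem hm hm') (lie_ι₀_nMinus φ δ d hδ m' hm' x)
  have hbr' : ∀ m ∈ nMinus k δ d, ∀ y ∈ S₀, ⁅m, y⁆ ∈ nMinus k δ d := by
    intro m hm y hy
    rw [← lie_skew]
    exact neg_mem (hbr y hy m hm)
  let K : LieSubalgebra k (gt k δ d) :=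
    { carrier := {m | m ∈ nMinus k δ d ∧ ∀ v : V, ⁅gtV k δ d v, m⁆ ∈ S₀}
      add_mem' := fun {a b} ha hb => ⟨add_mem ha.1 hb.1,
        fun v => by rw [lie_add]; exact add_mem (ha.2 v) (hb.2 v)⟩
      zero_mem' := ⟨zero_mem _, fun v => by rw [lie_zero]; exact zero_mem _⟩
      smul_mem' := fun c a ha => ⟨(nMinus k δ d).smul_mem c ha.1,
        fun v => by rw [lie_smul]; exact Submodule.smul_mem _ c (ha.2 v)⟩
      lie_mem' := fun {a b} ha hb => ⟨(nMinus k δ d).lie_mem ha.1 hb.1, fun v => by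
        rw [leibniz_lie]
        refine add_mem (le_sup_left (α := Submodule k (gt k δ d)) ?_)
          (le_sup_left (α := Submodule k (gt k δ d)) ?_)
        · exact hbr _ (ha.2 v) b hb.1
        · exact hbr' a ha.1 _ (hb.2 v)⟩ }
  have hle : nMinus k δ d ≤ K := by
    rw [nMinus]
    refine LieSubalgebra.lieSpan_le.2 ?_
    rintro _ ⟨f, rfl⟩
    refine ⟨gtD_mem_nMinus δ d f, fun v => ?_⟩
    rw [lie_gtV_gtD δ d v f]
    exact le_sup_right (α := Submodule k (gt k δ d)) (LinearMap.mem_range_self _ _)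
  exact fun m hm v => (hle hm).2 v

lemma lie_nPlus_gtD :
    ∀ p ∈ nPlus k δ d, ∀ f : Module.Dual k V,
      ⁅p, gtD k δ d f⁆ ∈ (nPlus k δ d).toSubmodule ⊔ LinearMap.range (ι₀ k δ d).toLinearMap := by
  set S₀ := (nPlus k δ d).toSubmodule ⊔ LinearMap.range (ι₀ k δ d).toLinearMap with hS₀def
  have hbr : ∀ p ∈ nPlus k δ d, ∀ y ∈ S₀, ⁅p, y⁆ ∈ nPlus k δ d := by
    intro p hp y hy
    obtain ⟨a, ha, b, hb, rfl⟩ := Submodule.mem_sup.1 hy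
    obtain ⟨x, rfl⟩ := hb
    rw [lie_add]
    refine add_mem ((nPlus k δ d).lie_mem hp ha) ?_
    rw [← lie_skew]
    exact neg_mem (lie_ι₀_nPlus φ δ d hδ p hp x)
  let K : LieSubalgebra k (gt k δ d) :=
    { carrier := {p | p ∈ nPlus k δ d ∧ ∀ f : Module.Dual k V, ⁅p, gtD k δ d f⁆ ∈ S₀}
      add_mem' := fun {a b} ha hb => ⟨add_mem ha.1 hb.1,
        fun f => by rw [add_lie]; exact add_mem (ha.2 f) (hb.2 f)⟩
      zero_mem' := ⟨zero_mem _, fun f => by rw [zero_lie]; exact zero_mem _⟩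
      smul_mem' := fun c a ha => ⟨(nPlus k δ d).smul_mem c ha.1,
        fun f => by rw [smul_lie]; exact Submodule.smul_mem _ c (ha.2 f)⟩
      lie_mem' := fun {a b} ha hb => ⟨(nPlus k δ d).lie_mem ha.1 hb.1, fun f => by
        rw [lie_lie]
        refine sub_mem (le_sup_left (α := Submodule k (gt k δ d)) ?_)
          (le_sup_left (α := Submodule k (gt k δ d)) ?_)
        · exact hbr a ha.1 _ (hb.2 f)
        · exact hbr b hb.1 _ (ha.2 f)⟩ }
  have hle : nPlus k δ d ≤ K := by
    rw [nPlus]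
    refine LieSubalgebra.lieSpan_le.2 ?_
    rintro _ ⟨v, rfl⟩
    refine ⟨gtV_mem_nPlus δ d v, fun f => ?_⟩
    rw [lie_gtV_gtD δ d v f]
    exact le_sup_right (α := Submodule k (gt k δ d)) (LinearMap.mem_range_self _ _)
  exact fun p hp f => (hle hp).2 f

omit hδ in
lemma gen_top :
    LieSubalgebra.lieSpan k (gt k δ d)
      (Set.range (gtV k δ d) ∪ Set.range (gtD k δ d) ∪ Set.range (ι₀ k δ d)) = ⊤ := by
  set T := LieSubalgebra.lieSpan k (gt k δ d)
      (Set.range (gtV k δ d) ∪ Set.range (gtD k δ d) ∪ Set.range (ι₀ k δ d)) with hT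
  rw [eq_top_iff]
  intro a _
  obtain ⟨p, rfl⟩ := Submodule.Quotient.mk_surjective (I0 k δ d).toSubmodule a
  have hp : (p : SD k δ) = mk δ p.1 0 + mk δ 0 p.2 := by
    show p = ((p.1 + 0, 0 + p.2) : (F k V) × X)
    rw [add_zero, zero_add]
    exact Prod.ext rfl rfl
  have hπ : Submodule.Quotient.mk (p := (I0 k δ d).toSubmodule) p = π k δ d p := rfl
  rw [hπ, hp, map_add]
  refine add_mem ?_ ?_
  · -- π (mk p.1 0) ∈ T
    let ψ : F k V →ₗ⁅k⁆ gt k δ d := (π k δ d).comp (LieSemidirectProduct.inl δ)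
    let K : LieSubalgebra k (TensorAlgebra k (V × Module.Dual k V)) :=
      { carrier := {a | ∃ h : a ∈ F k V, ψ ⟨a, h⟩ ∈ T}
        add_mem' := by
          rintro a b ⟨ha, hTa⟩ ⟨hb, hTb⟩
          refine ⟨add_mem ha hb, ?_⟩
          have : (⟨a + b, add_mem ha hb⟩ : F k V) = ⟨a, ha⟩ + ⟨b, hb⟩ := rfl
          rw [this, map_add]
          exact add_mem hTa hTb
        zero_mem' := by
          refine ⟨zero_mem _, ?_⟩
          have : (⟨0, zero_mem _⟩ : F k V) = 0 := rfl
          rw [this, map_zero]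
          exact zero_mem _
        smul_mem' := by
          rintro c a ⟨ha, hTa⟩
          refine ⟨Submodule.smul_mem _ c ha, ?_⟩
          have : (⟨c • a, Submodule.smul_mem _ c ha⟩ : F k V) = c • ⟨a, ha⟩ := rfl
          rw [this, map_smul]
          exact Submodule.smul_mem _ c hTa
        lie_mem' := by
          rintro a b ⟨ha, hTa⟩ ⟨hb, hTb⟩
          refine ⟨(F k V).lie_mem ha hb, ?_⟩
          have : (⟨⁅a, b⁆, (F k V).lie_mem ha hb⟩ : F k V) = ⁅(⟨a, ha⟩ : F k V), ⟨b, hb⟩⁆ := rfl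
          rw [this, LieHom.map_lie]
          exact T.lie_mem hTa hTb }
    have hFK : F k V ≤ K := by
      rw [F]
      refine LieSubalgebra.lieSpan_le.2 ?_
      rintro _ ⟨w, rfl⟩
      refine ⟨LieSubalgebra.subset_lieSpan ⟨w, rfl⟩, ?_⟩
      have hw : (⟨TensorAlgebra.ι k w, LieSubalgebra.subset_lieSpan ⟨w, rfl⟩⟩ : F k V)
          = ιF k V (w.1, w.2) := by
        apply Subtype.ext
        rfl
      rw [hw, ιF_split, map_add]
      refine add_mem ?_ ?_
      · exact LieSubalgebra.subset_lieSpan (Set.mem_union_left _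
          (Set.mem_union_left _ ⟨w.1, rfl⟩))
      · exact LieSubalgebra.subset_lieSpan (Set.mem_union_left _
          (Set.mem_union_right _ ⟨w.2, rfl⟩))
    obtain ⟨h, hT1⟩ := hFK p.1.2
    have : (⟨(p.1 : TensorAlgebra k (V × Module.Dual k V)), h⟩ : F k V) = p.1 := Subtype.ext rfl
    rw [this] at hT1
    exact hT1
  · exact LieSubalgebra.subset_lieSpan (Set.mem_union_right _ ⟨p.2, rfl⟩)

lemma S_eq_top :
    (nMinus k δ d).toSubmodule ⊔ LinearMap.range (ι₀ k δ d).toLinearMap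
      ⊔ (nPlus k δ d).toSubmodule = ⊤ := by
  set S := (nMinus k δ d).toSubmodule ⊔ LinearMap.range (ι₀ k δ d).toLinearMap
      ⊔ (nPlus k δ d).toSubmodule with hSdef
  have hA : (nMinus k δ d).toSubmodule ≤ S := le_sup_left.trans le_sup_left
  have hB : LinearMap.range (ι₀ k δ d).toLinearMap ≤ S := le_sup_right.trans le_sup_left
  have hC : (nPlus k δ d).toSubmodule ≤ S := le_sup_right
  have hmemS : ∀ s ∈ S, ∃ m ∈ nMinus k δ d, ∃ x : X, ∃ p ∈ nPlus k δ d,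
      s = m + ι₀ k δ d x + p := by
    intro s hs
    obtain ⟨y, hy, c, hc, rfl⟩ := Submodule.mem_sup.1 hs
    obtain ⟨m, hm, x, rfl⟩ := mem_sup_nMinus_ι₀ δ d hy
    exact ⟨m, hm, x, c, hc, rfl⟩
  -- The three generator cases
  have hgV : ∀ (v : V), ∀ s ∈ S, ⁅gtV k δ d v, s⁆ ∈ S := by
    intro v s hs
    obtain ⟨m, hm, x, p, hp, rfl⟩ := hmemS s hs
    rw [lie_add, lie_add]
    refine add_mem (add_mem ?_ ?_) ?_
    · exact (le_sup_left : (nMinus k δ d).toSubmodule ⊔ LinearMap.range (ι₀ k δ d).toLinearMap ≤ S)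
        (lie_gtV_nMinus φ δ d hδ m hm v)
    · rw [← lie_skew, lie_ι₀_gtV φ δ d hδ x v]
      exact neg_mem (hC (gtV_mem_nPlus δ d (φ x v)))
    · exact hC ((nPlus k δ d).lie_mem (gtV_mem_nPlus δ d v) hp)
  have hgD : ∀ (f : Module.Dual k V), ∀ s ∈ S, ⁅gtD k δ d f, s⁆ ∈ S := by
    intro f s hs
    obtain ⟨m, hm, x, p, hp, rfl⟩ := hmemS s hs
    rw [lie_add, lie_add]
    refine add_mem (add_mem ?_ ?_) ?_
    · exact hA ((nMinus k δ d).lie_mem (gtD_mem_nMinus δ d f) hm)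
    · rw [← lie_skew, lie_ι₀_gtD φ δ d hδ x f]
      exact neg_mem (hA (gtD_mem_nMinus δ d (dualAct k V φ x f)))
    · rw [← lie_skew]
      exact neg_mem ((sup_le hC hB) (lie_nPlus_gtD φ δ d hδ p hp f))
  have hgX : ∀ (x : X), ∀ s ∈ S, ⁅ι₀ k δ d x, s⁆ ∈ S := by
    intro x s hs
    obtain ⟨m, hm, x', p, hp, rfl⟩ := hmemS s hs
    rw [lie_add, lie_add]
    refine add_mem (add_mem ?_ ?_) ?_
    · exact hA (lie_ι₀_nMinus φ δ d hδ m hm x)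
    · rw [← LieHom.map_lie]
      exact hB (LinearMap.mem_range_self _ _)
    · exact hC (lie_ι₀_nPlus φ δ d hδ p hp x)
  let K : LieSubalgebra k (gt k δ d) :=
    { carrier := {a | a ∈ S ∧ ∀ s ∈ S, ⁅a, s⁆ ∈ S}
      add_mem' := fun {a b} ha hb => ⟨add_mem ha.1 hb.1,
        fun s hs => by rw [add_lie]; exact add_mem (ha.2 s hs) (hb.2 s hs)⟩
      zero_mem' := ⟨zero_mem _, fun s hs => by rw [zero_lie]; exact zero_mem _⟩
      smul_mem' := fun c a ha => ⟨Submodule.smul_mem _ c ha.1,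
        fun s hs => by rw [smul_lie]; exact Submodule.smul_mem _ c (ha.2 s hs)⟩
      lie_mem' := fun {a b} ha hb => ⟨ha.2 b hb.1, fun s hs => by
        rw [lie_lie]
        exact sub_mem (ha.2 _ (hb.2 s hs)) (hb.2 _ (ha.2 s hs))⟩ }
  have hKtop : (⊤ : LieSubalgebra k (gt k δ d)) ≤ K := by
    rw [← gen_top δ d]
    refine LieSubalgebra.lieSpan_le.2 ?_
    rintro a ((⟨v, rfl⟩ | ⟨f, rfl⟩) | ⟨x, rfl⟩)
    · exact ⟨hC (gtV_mem_nPlus δ d v), hgV v⟩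
    · exact ⟨hA (gtD_mem_nMinus δ d f), hgD f⟩
    · exact ⟨hB (LinearMap.mem_range_self _ _), hgX x⟩
  rw [eq_top_iff]
  exact fun a _ => (hKtop trivial).1

omit hδ in
lemma lie_mem_biSup (G : ℤ → Submodule k (gt k δ d))
    (hGb : ∀ m n : ℤ, ∀ a ∈ G m, ∀ b ∈ G n, ⁅a, b⁆ ∈ G (m + n))
    (p : ℤ → Prop) (hp : ∀ m n, p m → p n → p (m + n))
    {a b : gt k δ d} (ha : a ∈ ⨆ n, ⨆ _ : p n, G n) (hb : b ∈ ⨆ n, ⨆ _ : p n, G n) :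
    ⁅a, b⁆ ∈ ⨆ n, ⨆ _ : p n, G n := by
  set N := ⨆ n, ⨆ _ : p n, G n with hN
  suffices h : ∀ b', b' ∈ N → ⁅a, b'⁆ ∈ N from h b hb
  refine Submodule.iSup_induction (motive := fun a => ∀ b', b' ∈ N → ⁅a, b'⁆ ∈ N) _ ha ?_ ?_ ?_
  · intro i a' ha' b hb
    by_cases hpi : p i
    · rw [iSup_pos hpi] at ha'
      refine Submodule.iSup_induction (motive := fun b => ⁅a', b⁆ ∈ N) _ hb ?_ ?_ ?_
      · intro j b' hb'
        by_cases hpj : p j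
        · rw [iSup_pos hpj] at hb'
          have hle' : G (i + j) ≤ N := le_iSup_of_le (i + j)
            (le_iSup_of_le (hp i j hpi hpj) le_rfl)
          exact hle' (hGb i j a' ha' b' hb')
        · rw [iSup_neg hpj, Submodule.mem_bot] at hb'
          show ⁅a', b'⁆ ∈ N
          rw [hb', lie_zero]; exact zero_mem _
      · show ⁅a', (0 : gt k δ d)⁆ ∈ N
        rw [lie_zero]; exact zero_mem _
      · intro x y hx hy
        show ⁅a', x + y⁆ ∈ N
        rw [lie_add]; exact add_mem hx hy
    · rw [iSup_neg hpi, Submodule.mem_bot] at ha'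
      rw [ha', zero_lie]; exact zero_mem _
  · intro b hb; rw [zero_lie]; exact zero_mem _
  · intro x y hx hy b hb; rw [add_lie]; exact add_mem (hx b hb) (hy b hb)

omit hδ in
lemma nMinus_le_biSup (G : ℤ → Submodule k (gt k δ d))
    (hGb : ∀ m n : ℤ, ∀ a ∈ G m, ∀ b ∈ G n, ⁅a, b⁆ ∈ G (m + n))
    (hGD : ∀ f : Module.Dual k V, gtD k δ d f ∈ G (-1)) :
    (nMinus k δ d).toSubmodule ≤ ⨆ n : ℤ, ⨆ _ : n < 0, G n := by
  let K : LieSubalgebra k (gt k δ d) :=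
    { (⨆ n : ℤ, ⨆ _ : n < 0, G n : Submodule k (gt k δ d)) with
      lie_mem' := fun {a b} ha hb =>
        lie_mem_biSup δ d G hGb _ (fun m n hm hn => by omega) ha hb }
  have hle : nMinus k δ d ≤ K := by
    rw [nMinus]
    refine LieSubalgebra.lieSpan_le.2 ?_
    rintro _ ⟨f, rfl⟩
    have hle' : G (-1) ≤ ⨆ n : ℤ, ⨆ _ : n < 0, G n :=
      le_iSup_of_le (-1) (le_iSup_of_le (by norm_num) le_rfl)
    exact hle' (hGD f)
  exact fun a ha => hle ha

omit hδ in
lemma nPlus_le_biSup (G : ℤ → Submodule k (gt k δ d))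
    (hGb : ∀ m n : ℤ, ∀ a ∈ G m, ∀ b ∈ G n, ⁅a, b⁆ ∈ G (m + n))
    (hGV : ∀ v : V, gtV k δ d v ∈ G 1) :
    (nPlus k δ d).toSubmodule ≤ ⨆ n : ℤ, ⨆ _ : 0 < n, G n := by
  let K : LieSubalgebra k (gt k δ d) :=
    { (⨆ n : ℤ, ⨆ _ : 0 < n, G n : Submodule k (gt k δ d)) with
      lie_mem' := fun {a b} ha hb =>
        lie_mem_biSup δ d G hGb _ (fun m n hm hn => by omega) ha hb }
  have hle : nPlus k δ d ≤ K := by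
    rw [nPlus]
    refine LieSubalgebra.lieSpan_le.2 ?_
    rintro _ ⟨v, rfl⟩
    have hle' : G 1 ≤ ⨆ n : ℤ, ⨆ _ : 0 < n, G n :=
      le_iSup_of_le 1 (le_iSup_of_le (by norm_num) le_rfl)
    exact hle' (hGV v)
  exact fun a ha => hle ha

end Aux

section Lattice

lemma blockDisjoint {R M : Type*} [Ring R] [AddCommGroup M] [Module R M]
    {G : ℤ → Submodule R M} (hind : iSupIndep G)
    {p q : ℤ → Prop} (hpq : ∀ i, p i → q i → False) :
    Disjoint (⨆ n, ⨆ _ : p n, G n) (⨆ n, ⨆ _ : q n, G n) := by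
  classical
  refine Submodule.disjoint_def.2 fun x hx1 hx2 => ?_
  rw [Submodule.mem_biSup_iff_exists_dfinsupp] at hx1 hx2
  obtain ⟨f, hf⟩ := hx1
  obtain ⟨g, hg⟩ := hx2
  have h0 : (DFinsupp.lsum ℕ fun i => (G i).subtype) (f.filter p - g.filter q)
      = (DFinsupp.lsum ℕ fun i => (G i).subtype) 0 := by
    rw [map_sub, hf, hg, sub_self, map_zero]
  have h1 : f.filter p - g.filter q = 0 := hind.dfinsupp_lsum_injective h0
  have h2 : f.filter p = g.filter q := by rwa [sub_eq_zero] at h1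
  have h3 : f.filter p = 0 := by
    ext i
    by_cases hpi : p i
    · have := congrArg (fun F => F i) h2
      simp only [DFinsupp.filter_apply] at this ⊢
      by_cases hqi : q i
      · exact absurd (hpq i hpi hqi) (by simp)
      · rw [if_pos hpi] at this ⊢
        rw [if_neg hqi] at this
        rw [this]
        rfl
    · simp [DFinsupp.filter_apply, if_neg hpi]
  rw [← hf, h3, map_zero]

lemma sandwich {R M : Type*} [Ring R] [AddCommGroup M] [Module R M]
    {a A b B c C : Submodule R M} (ha : a ≤ A) (hb : b ≤ B) (hc : c ≤ C)
    (htop : a ⊔ b ⊔ c = ⊤) (hd : Disjoint A (B ⊔ C)) : A ≤ a := by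
  intro x hx
  have hx' : x ∈ a ⊔ b ⊔ c := htop ▸ Submodule.mem_top
  obtain ⟨y, hy, z, hz, rfl⟩ := Submodule.mem_sup.1 hx'
  obtain ⟨u, hu, w, hw, rfl⟩ := Submodule.mem_sup.1 hy
  have h1 : u + w + z - u ∈ A := sub_mem hx (ha hu)
  have h2 : u + w + z - u ∈ B ⊔ C := by
    have he : u + w + z - u = w + z := by abel
    rw [he]
    exact Submodule.mem_sup.2 ⟨w, hb hw, z, hc hz, rfl⟩
  have h3 : u + w + z - u = 0 := (Submodule.mem_bot R).1 (hd.le_bot ⟨h1, h2⟩)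
  have h4 : u + w + z = u := by rwa [sub_eq_zero] at h3
  rw [h4]
  exact hu

end Lattice

end Contragredient
namespace Contragredient

set_option maxHeartbeats 2000000 in
/-- Triangular decomposition of the auxiliary contragredient Lie algebra: if `𝔛` has enough
modules, then `g̃ = n₋ ⊕ ι₀(𝔛) ⊕ n₊` as `k`-vector spaces; moreover, with respect to the
ℤ-grading of `g̃` (with `V*` in degree `-1`, `𝔛` in degree `0` and `V` in degree `1`), one has
`n₋ = ⊕_{n<0} g̃ₙ`, `ι₀(𝔛) = g̃₀` and `n₊ = ⊕_{n>0} g̃ₙ`. -/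
theorem triangular_decomposition
    {k : Type*} [Field k]
    {X : Type*} [LieRing X] [LieAlgebra k X] [FiniteDimensional k X]
    {V : Type*} [AddCommGroup V] [Module k V] [FiniteDimensional k V]
    (φ : X →ₗ⁅k⁆ Module.End k V)
    (δ : X →ₗ⁅k⁆ LieDerivation k (F k V) (F k V))
    (hδ : ∀ (x : X) (v : V) (f : Module.Dual k V),
      ((δ x (ιF k V (v, f)) : F k V) : TensorAlgebra k (V × Module.Dual k V))
        = TensorAlgebra.ι k (φ x v, dualAct k V φ x f))
    (d : V ⊗[k] Module.Dual k V →ₗ[k] X)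
    (hd : ∀ (x : X) (v : V) (f : Module.Dual k V),
      ⁅x, d (v ⊗ₜ[k] f)⁆ = d (φ x v ⊗ₜ[k] f) + d (v ⊗ₜ[k] dualAct k V φ x f))
    (henough : HasEnoughModules.{w} k X)
    (G : ℤ → Submodule k (gt k δ d))
    (hG : DirectSum.IsInternal G)
    (hGb : ∀ (m n : ℤ), ∀ a ∈ G m, ∀ b ∈ G n, ⁅a, b⁆ ∈ G (m + n))
    (hGV : ∀ v : V, gtV k δ d v ∈ G 1)
    (hGX : ∀ x : X, ι₀ k δ d x ∈ G 0)
    (hGD : ∀ f : Module.Dual k V, gtD k δ d f ∈ G (-1)) :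
    DirectSum.IsInternal
      (fun j : Fin 3 =>
        ![(nMinus k δ d).toSubmodule,
          LinearMap.range (ι₀ k δ d).toLinearMap,
          (nPlus k δ d).toSubmodule] j) ∧
    (nMinus k δ d).toSubmodule = (⨆ n : ℤ, ⨆ _ : n < 0, G n) ∧
    LinearMap.range (ι₀ k δ d).toLinearMap = G 0 ∧
    (nPlus k δ d).toSubmodule = (⨆ n : ℤ, ⨆ _ : 0 < n, G n) := by

  classical
  obtain ⟨hind, -⟩ := (DirectSum.isInternal_submodule_iff_iSupIndep_and_iSup_eq_top G).1 hG
  set N := (⨆ n : ℤ, ⨆ _ : n < 0, G n) with hN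
  set P := (⨆ n : ℤ, ⨆ _ : 0 < n, G n) with hP
  have hSt : (nMinus k δ d).toSubmodule ⊔ LinearMap.range (ι₀ k δ d).toLinearMap
      ⊔ (nPlus k δ d).toSubmodule = ⊤ := S_eq_top φ δ d hδ
  have hNle : (nMinus k δ d).toSubmodule ≤ N := nMinus_le_biSup δ d G hGb hGD
  have hPle : (nPlus k δ d).toSubmodule ≤ P := nPlus_le_biSup δ d G hGb hGV
  have hXle : LinearMap.range (ι₀ k δ d).toLinearMap ≤ G 0 := by
    rintro _ ⟨x, rfl⟩
    exact hGX x
  have hD1 : Disjoint N (G 0 ⊔ P) := by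
    have hblock : Disjoint N (⨆ n, ⨆ _ : (0:ℤ) ≤ n, G n) :=
      blockDisjoint hind (fun i hi hq => by omega)
    refine hblock.mono_right (sup_le ?_ ?_)
    · exact le_iSup_of_le 0 (le_iSup_of_le le_rfl le_rfl)
    · exact iSup_mono fun n => iSup_le fun h => le_iSup_of_le h.le le_rfl
  have hD2 : Disjoint (G 0) (N ⊔ P) := by
    have hblock : Disjoint (⨆ n, ⨆ _ : n = (0:ℤ), G n) (⨆ n, ⨆ _ : n ≠ (0:ℤ), G n) :=
      blockDisjoint hind (fun i hi hq => hq hi)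
    have hG0 : G 0 ≤ ⨆ n, ⨆ _ : n = (0:ℤ), G n :=
      le_iSup_of_le 0 (le_iSup_of_le rfl le_rfl)
    refine (hblock.mono_left hG0).mono_right (sup_le ?_ ?_)
    · exact iSup_mono fun n => iSup_le fun h => le_iSup_of_le (by omega) le_rfl
    · exact iSup_mono fun n => iSup_le fun h => le_iSup_of_le (by omega) le_rfl
  have hD3 : Disjoint P (N ⊔ G 0) := by
    have hblock : Disjoint P (⨆ n, ⨆ _ : n ≤ (0:ℤ), G n) :=
      blockDisjoint hind (fun i hi hq => by omega)
    refine hblock.mono_right (sup_le ?_ ?_)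
    · exact iSup_mono fun n => iSup_le fun h => le_iSup_of_le h.le le_rfl
    · exact le_iSup_of_le 0 (le_iSup_of_le le_rfl le_rfl)
  have e1 : (nMinus k δ d).toSubmodule = N :=
    le_antisymm hNle (sandwich hNle hXle hPle hSt hD1)
  have e2 : LinearMap.range (ι₀ k δ d).toLinearMap = G 0 := by
    have htop2 : LinearMap.range (ι₀ k δ d).toLinearMap ⊔ (nMinus k δ d).toSubmodule
        ⊔ (nPlus k δ d).toSubmodule = ⊤ := by
      rw [sup_comm (LinearMap.range (ι₀ k δ d).toLinearMap) ((nMinus k δ d).toSubmodule)]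
      exact hSt
    exact le_antisymm hXle (sandwich hXle hNle hPle htop2 hD2)
  have e3 : (nPlus k δ d).toSubmodule = P := by
    have htop3 : (nPlus k δ d).toSubmodule ⊔ (nMinus k δ d).toSubmodule
        ⊔ LinearMap.range (ι₀ k δ d).toLinearMap = ⊤ := by
      rw [sup_assoc, sup_comm]
      exact hSt
    exact le_antisymm hPle (sandwich hPle hNle hXle htop3 hD3)
  have hD1' : Disjoint ((nMinus k δ d).toSubmodule)
      (LinearMap.range (ι₀ k δ d).toLinearMap ⊔ (nPlus k δ d).toSubmodule) := by
    rw [e1, e2, e3]; exact hD1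
  have hD2' : Disjoint (LinearMap.range (ι₀ k δ d).toLinearMap)
      ((nMinus k δ d).toSubmodule ⊔ (nPlus k δ d).toSubmodule) := by
    rw [e1, e2, e3]; exact hD2
  have hD3' : Disjoint ((nPlus k δ d).toSubmodule)
      ((nMinus k δ d).toSubmodule ⊔ LinearMap.range (ι₀ k δ d).toLinearMap) := by
    rw [e1, e2, e3]; exact hD3
  refine ⟨?_, e1, e2, e3⟩
  rw [DirectSum.isInternal_submodule_iff_iSupIndep_and_iSup_eq_top]
  set M : Fin 3 → Submodule k (gt k δ d) :=
    fun j => ![(nMinus k δ d).toSubmodule,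
      LinearMap.range (ι₀ k δ d).toLinearMap, (nPlus k δ d).toSubmodule] j with hM
  have hM0 : M 0 = (nMinus k δ d).toSubmodule := rfl
  have hM1 : M 1 = LinearMap.range (ι₀ k δ d).toLinearMap := rfl
  have hM2 : M 2 = (nPlus k δ d).toSubmodule := rfl
  constructor
  · rw [iSupIndep_def]
    intro i
    fin_cases i
    · have hle : (⨆ j, ⨆ _ : j ≠ (0 : Fin 3), M j) ≤ M 1 ⊔ M 2 := by
        refine iSup_le fun j => iSup_le fun hj => ?_
        fin_cases j
        · exact absurd rfl hj
        · exact le_sup_left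
        · exact le_sup_right
      exact Disjoint.mono_right hle hD1'
    · have hle : (⨆ j, ⨆ _ : j ≠ (1 : Fin 3), M j) ≤ M 0 ⊔ M 2 := by
        refine iSup_le fun j => iSup_le fun hj => ?_
        fin_cases j
        · exact le_sup_left
        · exact absurd rfl hj
        · exact le_sup_right
      exact Disjoint.mono_right hle hD2'
    · have hle : (⨆ j, ⨆ _ : j ≠ (2 : Fin 3), M j) ≤ M 0 ⊔ M 1 := by
        refine iSup_le fun j => iSup_le fun hj => ?_
        fin_cases j
        · exact le_sup_left
        · exact le_sup_right
        · exact absurd rfl hj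
      exact Disjoint.mono_right hle hD3'
  · refine le_antisymm le_top ?_
    rw [← hSt]
    refine sup_le (sup_le ?_ ?_) ?_
    · rw [← hM0]; exact le_iSup M 0
    · rw [← hM1]; exact le_iSup M 1
    · rw [← hM2]; exact le_iSup M 2

end Contragredient
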